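/- Define F(x) = (eˣ − 1)/e. The function x ↦ ln(1 − F(x))/x is decreasing on (0, 1]; moreover, for every x ∈ (0, 1], ln(1 − F(x))/x ≤ −1/e. -/

import Mathlib

open Real Set Filter Topology

private lemma u_pos {x : ℝ} (hx : x ∈ Set.Icc (0:ℝ) 1) :
    0 < 1 - (Real.exp x - 1) / Real.exp 1 := by
  have h1 : Real.exp x ≤ Real.exp 1 := Real.exp_le_exp.2 hx.2
  have h2 : (0:ℝ) < Real.exp 1 := Real.exp_pos 1
  rw [sub_pos, div_lt_one h2]
  linarith

private lemma h_concave :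
    ConcaveOn ℝ (Set.Icc (0:ℝ) 1)
      (fun x : ℝ => Real.log (1 - (Real.exp x - 1) / Real.exp 1)) := by
  set u : ℝ → ℝ := fun x => 1 - (Real.exp x - 1) / Real.exp 1 with hu_def
  have hucont : Continuous u := by
    fun_prop
  have himg : u '' Set.Icc (0:ℝ) 1 ⊆ Set.Ioi (0:ℝ) := by
    rintro _ ⟨x, hx, rfl⟩
    exact u_pos hx
  have hconv_img : Convex ℝ (u '' Set.Icc (0:ℝ) 1) :=
    ((isPreconnected_Icc).image u hucont.continuousOn).convex
  have hlog : ConcaveOn ℝ (u '' Set.Icc (0:ℝ) 1) Real.log :=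
    (strictConcaveOn_log_Ioi.concaveOn).subset himg hconv_img
  have hmono : MonotoneOn Real.log (u '' Set.Icc (0:ℝ) 1) :=
    (Real.strictMonoOn_log.monotoneOn).mono himg
  have hu : ConcaveOn ℝ (Set.Icc (0:ℝ) 1) u := by
    have hexp : ConvexOn ℝ (Set.Icc (0:ℝ) 1) Real.exp :=
      convexOn_exp.subset (Set.subset_univ _) (convex_Icc 0 1)
    have hsmul : ConvexOn ℝ (Set.Icc (0:ℝ) 1)
        (fun x => ((Real.exp 1)⁻¹ : ℝ) • Real.exp x) :=
      hexp.smul (by positivity)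
    have := (hsmul.neg.add_const (1 + (Real.exp 1)⁻¹))
    convert this using 1
    any_goals rfl
    funext x
    have h2 : Real.exp 1 ≠ 0 := (Real.exp_pos 1).ne'
    simp only [Pi.add_apply, Pi.neg_apply, smul_eq_mul, div_eq_mul_inv]
    ring
  exact hlog.comp hu hmono

private lemma h_zero : Real.log (1 - (Real.exp (0:ℝ) - 1) / Real.exp 1) = 0 := by
  simp [Real.exp_zero]

private lemma anti :
    AntitoneOn (fun x : ℝ => Real.log (1 - (Real.exp x - 1) / Real.exp 1) / x)
      (Set.Ioc 0 1) := by
  intro x hx y hy hxy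
  rcases eq_or_lt_of_le hxy with rfl | hlt
  · exact le_refl _
  · set h : ℝ → ℝ := fun x => Real.log (1 - (Real.exp x - 1) / Real.exp 1) with hh
    have hconv : ConvexOn ℝ (Set.Icc (0:ℝ) 1) (-h) := h_concave.neg
    have h0 : (0:ℝ) ∈ Set.Icc (0:ℝ) 1 := by constructor <;> norm_num
    have hxI : x ∈ Set.Icc (0:ℝ) 1 := ⟨hx.1.le, hx.2⟩
    have hyI : y ∈ Set.Icc (0:ℝ) 1 := ⟨hy.1.le, hy.2⟩
    have key := hconv.secant_mono h0 hxI hyI hx.1.ne' hy.1.ne' hxy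
    have h00 : h 0 = 0 := h_zero
    simp only [Pi.neg_apply, sub_zero, h00, neg_zero, neg_div] at key
    show h y / y ≤ h x / x
    linarith

theorem stmt_8 :
    AntitoneOn (fun x : ℝ => Real.log (1 - (Real.exp x - 1) / Real.exp 1) / x)
      (Set.Ioc 0 1) ∧
    ∀ x ∈ Set.Ioc (0 : ℝ) 1,
      Real.log (1 - (Real.exp x - 1) / Real.exp 1) / x ≤ -1 / Real.exp 1 := by
  refine ⟨anti, ?_⟩
  intro x hx
  set h : ℝ → ℝ := fun x => Real.log (1 - (Real.exp x - 1) / Real.exp 1) with hh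
  -- derivative of h at 0 is -1/e
  have hw : HasDerivAt (fun y : ℝ => 1 - (Real.exp y - 1) / Real.exp 1)
      (-(Real.exp 0 / Real.exp 1)) 0 :=
    (((Real.hasDerivAt_exp 0).sub_const 1).div_const (Real.exp 1)).const_sub 1
  have hw0 : (1 : ℝ) - (Real.exp 0 - 1) / Real.exp 1 = 1 := by simp [Real.exp_zero]
  have hd : HasDerivAt h (-1 / Real.exp 1) 0 := by
    have := hw.log (by rw [hw0]; norm_num)
    simpa [hw0, Real.exp_zero, neg_div] using this
  have htend : Tendsto (slope h 0) (𝓝[>] (0:ℝ)) (𝓝 (-1 / Real.exp 1)) :=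
    (hasDerivAt_iff_tendsto_slope.mp hd).mono_left
      (nhdsWithin_mono 0 (fun y hy => ne_of_gt hy))
  refine ge_of_tendsto htend ?_
  have hmem : Set.Ioo (0:ℝ) (min x 1) ∈ 𝓝[>] (0:ℝ) :=
    Ioo_mem_nhdsGT_of_mem ⟨le_refl 0, lt_min hx.1 one_pos⟩
  filter_upwards [hmem] with y hy
  have hyI : y ∈ Set.Ioc (0:ℝ) 1 := ⟨hy.1, (hy.2.trans_le (min_le_right _ _)).le⟩
  have hyx : y ≤ x := (hy.2.trans_le (min_le_left _ _)).le
  have := anti hyI hx hyx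
  rw [slope_def_field]
  have h00 : h 0 = 0 := h_zero
  rw [hh] at h00 ⊢
  simp only [h00, sub_zero]
  simpa using this
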